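/- If C is a set of probability measures on X^∞ with V_C > 0, then no predictor is admissible: for every probability measure ρ on X^∞ there exists a probability measure ρ' such that D(μ,ρ') ≤ D(μ,ρ) for all μ ∈ C and D(μ₀,ρ') < D(μ₀,ρ) for some μ₀ ∈ C. (Concretely, one can take μ₀ ∈ C with D(μ₀,ρ) > 0 and ρ' := (1/2)(ρ + μ₀).) -/

import Mathlib

open MeasureTheory Filter
open scoped ENNReal

variable {X : Type} [Fintype X] [Nonempty X] [MeasurableSpace X] [DiscreteMeasurableSpace X]

/-- Cylinder set of sequences beginning with `x`. -/
def cyl {X : Type} {n : ℕ} (x : Fin n → X) : Set (ℕ → X) :=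
  {ω | ∀ i : Fin n, ω (i : ℕ) = x i}

/-- `p · log₂(p/q)` with the conventions `0 · log₂(0/q) = 0` and `p · log₂(p/0) = +∞` for `p > 0`. -/
noncomputable def klTerm (p q : ℝ) : EReal :=
  if p = 0 then 0 else if q = 0 then ⊤ else ((p * Real.logb 2 (p / q) : ℝ) : EReal)

/-- Expected cumulative KL divergence `d_n(μ,ρ)`. -/
noncomputable def klDiv (n : ℕ) (μ ρ : Measure (ℕ → X)) : EReal :=
  ∑ x : Fin n → X, klTerm (μ (cyl x)).toReal (ρ (cyl x)).toReal

/-- Asymptotic average KL loss `D(μ,ρ)`. -/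
noncomputable def Dbar (μ ρ : Measure (ℕ → X)) : EReal :=
  Filter.limsup (fun n : ℕ => (((n : ℝ)⁻¹ : ℝ) : EReal) * klDiv n μ ρ) Filter.atTop

/-- Minimax value `V_C`. -/
noncomputable def Vmin (C : Set (Measure (ℕ → X))) : EReal :=
  ⨅ ρ : {ρ : Measure (ℕ → X) // IsProbabilityMeasure ρ}, ⨆ μ ∈ C, Dbar μ ρ.1

/-- Countable mixture `Σ_k v_k μ_k`. -/
noncomputable def mixture (v : ℕ → ℝ) (μs : ℕ → Measure (ℕ → X)) : Measure (ℕ → X) :=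
  MeasureTheory.Measure.sum (fun k => ENNReal.ofReal (v k) • μs k)

-- aux lemmas
lemma klTerm_ne_bot (p q : ℝ) : klTerm p q ≠ ⊥ := by
  unfold klTerm
  split_ifs with h1 h2
  · simp
  · simp
  · exact EReal.coe_ne_bot _

lemma sum_ne_bot {α : Type*} {s : Finset α} {f : α → EReal} (h : ∀ a ∈ s, f a ≠ ⊥) :
    ∑ a ∈ s, f a ≠ ⊥ := by
  induction s using Finset.cons_induction with
  | empty => simp
  | cons a s ha ih =>
    rw [Finset.sum_cons, Ne, EReal.add_eq_bot_iff]
    push_neg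
    exact ⟨h a (Finset.mem_cons_self a s), ih fun b hb => h b (Finset.mem_cons_of_mem hb)⟩

lemma cyl_measurable {n : ℕ} (x : Fin n → X) : MeasurableSet (cyl x) := by
  have : cyl x = ⋂ i : Fin n, (fun ω : ℕ → X => ω (i : ℕ)) ⁻¹' {x i} := by
    ext ω; simp [cyl]
  rw [this]
  exact MeasurableSet.iInter fun i => (measurable_pi_apply _) (measurableSet_singleton _)

lemma sum_cyl (μ : Measure (ℕ → X)) [IsProbabilityMeasure μ] (n : ℕ) :
    ∑ x : Fin n → X, (μ (cyl x)).toReal = 1 := by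
  have hd : Pairwise (Function.onFun Disjoint fun x : Fin n → X => cyl x) := by
    intro x y hxy
    refine Set.disjoint_left.2 fun ω hx hy' => hxy ?_
    funext i; rw [← hx i, ← hy' i]
  have hsum : ∑ x : Fin n → X, μ (cyl x) = 1 := by
    rw [← tsum_fintype (L := SummationFilter.unconditional _), ← measure_iUnion hd fun x => cyl_measurable x]
    have hu : ⋃ x : Fin n → X, cyl x = Set.univ :=
      Set.eq_univ_of_forall fun ω => Set.mem_iUnion.2 ⟨fun i => ω i, fun i => rfl⟩
    rw [hu, measure_univ]
  rw [← ENNReal.toReal_sum fun a _ => measure_ne_top μ _, hsum, ENNReal.toReal_one]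

lemma klTerm_le_add {p q q' : ℝ} (hp : 0 ≤ p) (hq : 0 ≤ q) (hq' : q / 2 ≤ q') :
    klTerm p q' ≤ klTerm p q + (p : EReal) := by
  unfold klTerm
  by_cases hp0 : p = 0
  · simp [hp0]
  · have hppos : 0 < p := lt_of_le_of_ne hp (Ne.symm hp0)
    by_cases hq0 : q = 0
    · rw [if_neg hp0, if_neg hp0, if_pos hq0, EReal.top_add_of_ne_bot (EReal.coe_ne_bot p)]
      exact le_top
    · have hqpos : 0 < q := lt_of_le_of_ne hq (Ne.symm hq0)
      have hq'pos : 0 < q' := lt_of_lt_of_le (by linarith) hq'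
      rw [if_neg hp0, if_neg hp0, if_neg hq0, if_neg (ne_of_gt hq'pos), ← EReal.coe_add,
        EReal.coe_le_coe_iff]
      have h1 : p / q' ≤ p / (q / 2) := by gcongr
      have h3 : p / (q / 2) = 2 * (p / q) := by field_simp
      have h4 : Real.logb 2 (2 * (p / q)) = 1 + Real.logb 2 (p / q) := by
        rw [Real.logb_mul two_ne_zero (by positivity), Real.logb_self_eq_one (by norm_num)]
      have h2 : Real.logb 2 (p / q') ≤ 1 + Real.logb 2 (p / q) := by
        rw [← h4, ← h3]
        exact Real.logb_le_logb_of_le (by norm_num) (by positivity) h1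
      nlinarith [mul_le_mul_of_nonneg_left h2 hp]

lemma klTerm_le_self {p q' : ℝ} (hp : 0 ≤ p) (hq' : p / 2 ≤ q') : klTerm p q' ≤ (p : EReal) := by
  unfold klTerm
  by_cases hp0 : p = 0
  · simp [hp0]
  · have hppos : 0 < p := lt_of_le_of_ne hp (Ne.symm hp0)
    have hq'pos : 0 < q' := lt_of_lt_of_le (by linarith) hq'
    rw [if_neg hp0, if_neg (ne_of_gt hq'pos), EReal.coe_le_coe_iff]
    have h1 : p / q' ≤ 2 := by
      rw [div_le_iff₀ hq'pos]; linarith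
    have h2 : Real.logb 2 (p / q') ≤ 1 := by
      calc Real.logb 2 (p / q') ≤ Real.logb 2 2 :=
            Real.logb_le_logb_of_le (by norm_num) (by positivity) h1
        _ = 1 := Real.logb_self_eq_one (by norm_num)
    nlinarith [mul_le_mul_of_nonneg_left h2 hp]

lemma ereal_mul_le (c : ℝ) (hc : 0 ≤ c) {a b : EReal} (hb : b ≠ ⊥) (h : a ≤ b + 1) :
    (c : EReal) * a ≤ (c : EReal) * b + (c : EReal) := by
  rcases eq_or_lt_of_le hc with hc0 | hcpos
  · simp [← hc0, EReal.zero_mul]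
  · induction b with
    | bot => exact absurd rfl hb
    | top =>
      rw [EReal.mul_top_of_pos (by exact_mod_cast hcpos),
        EReal.top_add_of_ne_bot (EReal.coe_ne_bot c)]
      exact le_top
    | coe r =>
      induction a with
      | bot => simp [EReal.mul_bot_of_pos (show (0:EReal) < (c:EReal) by exact_mod_cast hcpos)]
      | top =>
        exfalso
        have : ((r : EReal) + 1) < ⊤ := by
          rw [show ((1:EReal)) = ((1:ℝ):EReal) from rfl, ← EReal.coe_add]
          exact EReal.coe_lt_top _
        exact absurd h (not_le.2 this)
      | coe s =>
        have hs : s ≤ r + 1 := by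
          rw [show ((1:EReal)) = ((1:ℝ):EReal) from rfl, ← EReal.coe_add,
            EReal.coe_le_coe_iff] at h
          exact h
        rw [← EReal.coe_mul, ← EReal.coe_mul, ← EReal.coe_add, EReal.coe_le_coe_iff]
        nlinarith

lemma limsup_inv_nat : limsup (fun n : ℕ => (((n : ℝ)⁻¹ : ℝ) : EReal)) atTop = 0 := by
  have : Tendsto (fun n : ℕ => (((n : ℝ)⁻¹ : ℝ) : EReal)) atTop (nhds ((0:ℝ):EReal)) :=
    (EReal.tendsto_coe).2 tendsto_inv_atTop_nhds_zero_nat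
  simpa using this.limsup_eq

lemma ereal_coe_sum {α : Type*} (s : Finset α) (f : α → ℝ) :
    ((∑ a ∈ s, f a : ℝ) : EReal) = ∑ a ∈ s, ((f a : ℝ) : EReal) := by
  induction s using Finset.cons_induction with
  | empty => simp
  | cons a s ha ih => rw [Finset.sum_cons, Finset.sum_cons, EReal.coe_add, ih]


set_option maxHeartbeats 1000000 in
/-- If V_C > 0 then no predictor is admissible: for every probability
measure ρ there is a probability measure ρ' that is better, i.e. D(μ,ρ') ≤ D(μ,ρ) for
all μ ∈ C with strict inequality for some μ₀ ∈ C. -/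
theorem statement3 (C : Set (Measure (ℕ → X))) (hC : ∀ μ ∈ C, IsProbabilityMeasure μ)
    (hV : 0 < Vmin C) (ρ : Measure (ℕ → X)) (hρ : IsProbabilityMeasure ρ) :
    ∃ ρ' : Measure (ℕ → X), IsProbabilityMeasure ρ' ∧
      (∀ μ ∈ C, Dbar μ ρ' ≤ Dbar μ ρ) ∧ ∃ μ₀ ∈ C, Dbar μ₀ ρ' < Dbar μ₀ ρ := by
  have hs : Vmin C ≤ ⨆ μ ∈ C, Dbar μ ρ := by
    have h := iInf_le (fun p : {ρ : Measure (ℕ → X) // IsProbabilityMeasure ρ} =>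
      ⨆ μ ∈ C, Dbar μ p.1) ⟨ρ, hρ⟩
    simp only at h
    exact h
  have h0 : 0 < ⨆ μ ∈ C, Dbar μ ρ := lt_of_lt_of_le hV hs
  obtain ⟨μ₀, hμ₀C, hμ₀⟩ : ∃ μ₀ ∈ C, 0 < Dbar μ₀ ρ := by
    by_contra h
    push_neg at h
    exact absurd h0 (not_lt.2 (iSup₂_le fun μ hμ => h μ hμ))
  haveI hμ₀P : IsProbabilityMeasure μ₀ := hC μ₀ hμ₀C
  set ρ' : Measure (ℕ → X) := (2 : ℝ≥0∞)⁻¹ • ρ + (2 : ℝ≥0∞)⁻¹ • μ₀ with hρ'def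
  have key : ∀ A : Set (ℕ → X), (ρ' A).toReal = (ρ A).toReal / 2 + (μ₀ A).toReal / 2 := by
    intro A
    have h2 : ((2 : ℝ≥0∞)⁻¹).toReal = 1 / 2 := by simp
    rw [hρ'def, Measure.add_apply, Measure.smul_apply, Measure.smul_apply, smul_eq_mul,
      smul_eq_mul, ENNReal.toReal_add (by finiteness) (by finiteness), ENNReal.toReal_mul,
      ENNReal.toReal_mul, h2]
    ring
  have hρ'P : IsProbabilityMeasure ρ' := by
    constructor
    rw [hρ'def, Measure.add_apply, Measure.smul_apply, Measure.smul_apply, smul_eq_mul,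
      smul_eq_mul, measure_univ, measure_univ, mul_one, ENNReal.inv_two_add_inv_two]
  have hlimc : limsup (fun n : ℕ => (((n : ℝ)⁻¹ : ℝ) : EReal)) atTop = 0 := limsup_inv_nat
  have main : ∀ μ : Measure (ℕ → X), IsProbabilityMeasure μ → Dbar μ ρ' ≤ Dbar μ ρ := by
    intro μ hμP
    have hstep : ∀ n, klDiv n μ ρ' ≤ klDiv n μ ρ + 1 := by
      intro n
      have h1 : klDiv n μ ρ' ≤ ∑ x : Fin n → X,
          (klTerm (μ (cyl x)).toReal (ρ (cyl x)).toReal + (((μ (cyl x)).toReal : ℝ) : EReal)) := by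
        apply Finset.sum_le_sum
        intro x _
        apply klTerm_le_add ENNReal.toReal_nonneg ENNReal.toReal_nonneg
        rw [key]
        have := ENNReal.toReal_nonneg (a := μ₀ (cyl x))
        linarith
      calc klDiv n μ ρ' ≤ _ := h1
        _ = klDiv n μ ρ + ∑ x : Fin n → X, (((μ (cyl x)).toReal : ℝ) : EReal) := by
            rw [Finset.sum_add_distrib]; rfl
        _ = klDiv n μ ρ + 1 := by
            rw [← ereal_coe_sum, sum_cyl μ n, EReal.coe_one]
    have h1 : ∀ n : ℕ, (((n : ℝ)⁻¹ : ℝ) : EReal) * klDiv n μ ρ' ≤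
        (((n : ℝ)⁻¹ : ℝ) : EReal) * klDiv n μ ρ + (((n : ℝ)⁻¹ : ℝ) : EReal) := fun n =>
      ereal_mul_le _ (by positivity) (sum_ne_bot fun x _ => klTerm_ne_bot _ _) (hstep n)
    calc Dbar μ ρ' ≤ limsup (fun n : ℕ => (((n : ℝ)⁻¹ : ℝ) : EReal) * klDiv n μ ρ +
          (((n : ℝ)⁻¹ : ℝ) : EReal)) atTop := limsup_le_limsup (Eventually.of_forall h1)
      _ ≤ limsup (fun n : ℕ => (((n : ℝ)⁻¹ : ℝ) : EReal) * klDiv n μ ρ) atTop +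
          limsup (fun n : ℕ => (((n : ℝ)⁻¹ : ℝ) : EReal)) atTop :=
          EReal.limsup_add_le (Or.inr (by rw [hlimc]; simp)) (Or.inr (by rw [hlimc]; simp))
      _ = Dbar μ ρ := by rw [hlimc, add_zero]; rfl
  refine ⟨ρ', hρ'P, fun μ hμ => main μ (hC μ hμ), μ₀, hμ₀C, ?_⟩
  have hle : Dbar μ₀ ρ' ≤ 0 := by
    have hstep : ∀ n : ℕ, (((n : ℝ)⁻¹ : ℝ) : EReal) * klDiv n μ₀ ρ' ≤
        (((n : ℝ)⁻¹ : ℝ) : EReal) := by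
      intro n
      have h1 : klDiv n μ₀ ρ' ≤ ((1 : ℝ) : EReal) := by
        calc klDiv n μ₀ ρ' ≤ ∑ x : Fin n → X, (((μ₀ (cyl x)).toReal : ℝ) : EReal) := by
              apply Finset.sum_le_sum
              intro x _
              apply klTerm_le_self ENNReal.toReal_nonneg
              rw [key]
              have := ENNReal.toReal_nonneg (a := ρ (cyl x))
              linarith
          _ = ((1 : ℝ) : EReal) := by rw [← ereal_coe_sum, sum_cyl μ₀ n]
      calc (((n : ℝ)⁻¹ : ℝ) : EReal) * klDiv n μ₀ ρ' ≤
            (((n : ℝ)⁻¹ : ℝ) : EReal) * ((1 : ℝ) : EReal) :=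
            mul_le_mul_of_nonneg_left h1 (by exact_mod_cast inv_nonneg.2 (Nat.cast_nonneg n))
        _ = (((n : ℝ)⁻¹ : ℝ) : EReal) := by rw [EReal.coe_one, mul_one]
    calc Dbar μ₀ ρ' ≤ limsup (fun n : ℕ => (((n : ℝ)⁻¹ : ℝ) : EReal)) atTop :=
          limsup_le_limsup (Eventually.of_forall hstep)
      _ = 0 := hlimc
  exact lt_of_le_of_lt hle hμ₀
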